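/- Let a = −1 and let f : ℝ → ℝ be differentiable. Then the characteristic polynomial of the Jacobian matrix of V_{−1,f} at the point (0,0,1) equals (X − 4)·((X + 2)² + f(0)²); hence its complex eigenvalues are 4 and −2 ± i·f(0) (a nondegenerate focus when f(0) ≠ 0), and the sum of the eigenvalues (the trace) is 0, consistent with V_{−1,f} being divergence-free. -/

import Mathlib

open Polynomial

/-- `H_a(x,y,z) = (x² + y²)(x² + y² + z² + a)`. -/
noncomputable def Ha3 (a : ℝ) : ℝ × ℝ × ℝ → ℝ :=
  fun p => (p.1 ^ 2 + p.2.1 ^ 2) * (p.1 ^ 2 + p.2.1 ^ 2 + p.2.2 ^ 2 + a)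

/-- The vortex-plug vector field
`V_{a,f}(x,y,z) = (−2xz − f(H_a)·y, −2yz + f(H_a)·x, 2(2(x²+y²)+z²+a))`. -/
noncomputable def Vaf (a : ℝ) (f : ℝ → ℝ) : ℝ × ℝ × ℝ → ℝ × ℝ × ℝ :=
  fun p =>
    (-2 * p.1 * p.2.2 - f (Ha3 a p) * p.2.1,
      -2 * p.2.1 * p.2.2 + f (Ha3 a p) * p.1,
      2 * (2 * (p.1 ^ 2 + p.2.1 ^ 2) + p.2.2 ^ 2 + a))

/-- For `a = −1` and differentiable `f`, the Jacobian of `V_{−1,f}` at `(0,0,1)` is the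
matrix `[[−2, −f(0), 0], [f(0), −2, 0], [0, 0, 4]]`, whose characteristic polynomial is
`(X − 4)((X + 2)² + f(0)²)`; its complex eigenvalues are `4` and `−2 ± i f(0)`, and their
sum (the trace) is `0`, consistent with `V_{−1,f}` being divergence-free. -/
theorem stmt12 (f : ℝ → ℝ) (hf : Differentiable ℝ f) :
    (∀ q : ℝ × ℝ × ℝ,
      fderiv ℝ (Vaf (-1) f) ((0 : ℝ), (0 : ℝ), (1 : ℝ)) q =
        (-2 * q.1 - f 0 * q.2.1, f 0 * q.1 - 2 * q.2.1, 4 * q.2.2)) ∧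
    Matrix.charpoly !![(-2 : ℝ), -f 0, 0; f 0, -2, 0; 0, 0, 4] =
      (X - C 4) * ((X + C 2) ^ 2 + C (f 0) ^ 2) ∧
    Polynomial.IsRoot
      ((Matrix.charpoly !![(-2 : ℝ), -f 0, 0; f 0, -2, 0; 0, 0, 4]).map
        (algebraMap ℝ ℂ)) 4 ∧
    Polynomial.IsRoot
      ((Matrix.charpoly !![(-2 : ℝ), -f 0, 0; f 0, -2, 0; 0, 0, 4]).map
        (algebraMap ℝ ℂ)) (-2 + Complex.I * (f 0 : ℂ)) ∧
    Polynomial.IsRoot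
      ((Matrix.charpoly !![(-2 : ℝ), -f 0, 0; f 0, -2, 0; 0, 0, 4]).map
        (algebraMap ℝ ℂ)) (-2 - Complex.I * (f 0 : ℂ)) ∧
    (4 : ℂ) + (-2 + Complex.I * (f 0 : ℂ)) + (-2 - Complex.I * (f 0 : ℂ)) = 0 ∧
    Matrix.trace !![(-2 : ℝ), -f 0, 0; f 0, -2, 0; 0, 0, 4] = 0 := by
  refine ⟨?_, ?_, ?_, ?_, ?_, ?_, ?_⟩
  · intro q
    set p0 : ℝ × ℝ × ℝ := ((0:ℝ), (0:ℝ), (1:ℝ)) with hp0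
    have hx : HasFDerivAt (fun p : ℝ×ℝ×ℝ => p.1)
        (ContinuousLinearMap.fst ℝ ℝ (ℝ×ℝ)) p0 := hasFDerivAt_fst
    have hy : HasFDerivAt (fun p : ℝ×ℝ×ℝ => p.2.1)
        ((ContinuousLinearMap.fst ℝ ℝ ℝ).comp (ContinuousLinearMap.snd ℝ ℝ (ℝ×ℝ))) p0 :=
      hasFDerivAt_fst.comp p0 hasFDerivAt_snd
    have hz : HasFDerivAt (fun p : ℝ×ℝ×ℝ => p.2.2)
        ((ContinuousLinearMap.snd ℝ ℝ ℝ).comp (ContinuousLinearMap.snd ℝ ℝ (ℝ×ℝ))) p0 :=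
      hasFDerivAt_snd.comp p0 hasFDerivAt_snd
    have hx2 := hx.mul hx
    have hy2 := hy.mul hy
    have hz2 := hz.mul hz
    simp only [← pow_two] at hx2 hy2 hz2
    have hu := hx2.add hy2
    have hv := ((hu.add hz2).add_const (-1))
    have hH : HasFDerivAt (Ha3 (-1)) _ p0 := hu.mul hv
    have hfH : HasFDerivAt (fun p => f (Ha3 (-1) p)) _ p0 :=
      (hf (Ha3 (-1) p0)).hasFDerivAt.comp p0 hH
    have h1 := ((hx.const_mul (-2)).mul hz).sub (hfH.mul hy)
    have h2 := ((hy.const_mul (-2)).mul hz).add (hfH.mul hx)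
    have h3 := (((hu.const_mul 2).add hz2).add_const (-1)).const_mul 2
    have hV : HasFDerivAt (Vaf (-1) f) _ p0 := HasFDerivAt.prodMk h1 (HasFDerivAt.prodMk h2 h3)
    rw [hV.fderiv]
    have hH0 : Ha3 (-1) p0 = 0 := by simp [Ha3, hp0]
    simp [hp0, hH0, Ha3]
    constructor <;> ring
  · simp [Matrix.charpoly, Matrix.det_fin_three, Matrix.charmatrix_apply]
    ring
  · have h : Matrix.charpoly !![(-2 : ℝ), -f 0, 0; f 0, -2, 0; 0, 0, 4] =
        (X - C 4) * ((X + C 2) ^ 2 + C (f 0) ^ 2) := by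
      simp [Matrix.charpoly, Matrix.det_fin_three, Matrix.charmatrix_apply]
      ring
    simp [h, Polynomial.IsRoot, Polynomial.eval_map, Polynomial.eval₂_mul,
      Polynomial.eval₂_sub, Polynomial.eval₂_add, Polynomial.eval₂_pow]
  · have h : Matrix.charpoly !![(-2 : ℝ), -f 0, 0; f 0, -2, 0; 0, 0, 4] =
        (X - C 4) * ((X + C 2) ^ 2 + C (f 0) ^ 2) := by
      simp [Matrix.charpoly, Matrix.det_fin_three, Matrix.charmatrix_apply]
      ring
    simp [h, Polynomial.IsRoot, Polynomial.eval_map, Polynomial.eval₂_mul,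
      Polynomial.eval₂_sub, Polynomial.eval₂_add, Polynomial.eval₂_pow]
    right
    ring_nf
    simp [Complex.I_sq]
  · have h : Matrix.charpoly !![(-2 : ℝ), -f 0, 0; f 0, -2, 0; 0, 0, 4] =
        (X - C 4) * ((X + C 2) ^ 2 + C (f 0) ^ 2) := by
      simp [Matrix.charpoly, Matrix.det_fin_three, Matrix.charmatrix_apply]
      ring
    simp [h, Polynomial.IsRoot, Polynomial.eval_map, Polynomial.eval₂_mul,
      Polynomial.eval₂_sub, Polynomial.eval₂_add, Polynomial.eval₂_pow]
    right
    ring_nf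
    simp [Complex.I_sq]
  · ring
  · simp [Matrix.trace_fin_three]
    ring
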